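/- For every n ≥ 1, the number of admissible pinnacle sets S ⊆ [n] (including the empty set) is binomial(n-1, ⌊(n-1)/2⌋). -/

import Mathlib

/-- `i` is a peak of the permutation `w` of `{1,…,n}` (represented on `Fin n`):
`0 < i < n-1` (0-indexed) and `w(i-1) < w(i) > w(i+1)`. -/
def IsPeak {n : ℕ} (w : Equiv.Perm (Fin n)) (i : Fin n) : Prop :=
  0 < i.val ∧ ∃ h : i.val + 1 < n,
    w ⟨i.val - 1, Nat.lt_of_le_of_lt (Nat.sub_le _ _) i.isLt⟩ < w i ∧
    w ⟨i.val + 1, h⟩ < w i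

/-- The pinnacle set of `w`, as a set of values in `{1,…,n}`. -/
def Pin {n : ℕ} (w : Equiv.Perm (Fin n)) : Set ℕ :=
  {v | ∃ i : Fin n, IsPeak w i ∧ v = (w i).val + 1}

/-- `p_S(n)`: the number of permutations in `S_n` with pinnacle set `S`. -/
noncomputable def pcount (n : ℕ) (S : Set ℕ) : ℕ :=
  Nat.card {w : Equiv.Perm (Fin n) // Pin w = S}

/-- `S` is an admissible pinnacle set. -/
def Admissible (S : Finset ℕ) : Prop :=
  ∃ (n : ℕ) (w : Equiv.Perm (Fin n)), Pin w = ↑S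

open Finset Equiv

lemma wcongr {n : ℕ} (w : Equiv.Perm (Fin n)) {a b : ℕ} {pa : a < n} {pb : b < n}
    (h : a = b) : w ⟨a, pa⟩ = w ⟨b, pb⟩ := by subst h; rfl

lemma isPeak_iff {n : ℕ} (w : Equiv.Perm (Fin n)) (i : Fin n) :
    IsPeak w i ↔ 0 < i.val ∧ ∃ h : i.val + 1 < n,
      (∀ (h1 : i.val - 1 < n), (w ⟨i.val - 1, h1⟩).val < (w i).val) ∧
      (∀ (h2 : i.val + 1 < n), (w ⟨i.val + 1, h2⟩).val < (w i).val) := by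
  constructor
  · rintro ⟨h0, h, hl, hr⟩
    exact ⟨h0, h, fun h1 => hl, fun h2 => hr⟩
  · rintro ⟨h0, h, hl, hr⟩
    exact ⟨h0, h, hl _, hr _⟩

/-- append a new maximum at the end -/
noncomputable def pad {m : ℕ} (w : Equiv.Perm (Fin m)) : Equiv.Perm (Fin (m+1)) :=
  Equiv.ofBijective
    (fun i => if h : i.val < m then ⟨(w ⟨i.val, h⟩).val, by omega⟩ else ⟨m, by omega⟩)
    (by
      apply Finite.injective_iff_bijective.mp
      intro i j hij
      by_cases hi : i.val < m <;> by_cases hj : j.val < m <;>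
        simp only [dif_pos, dif_neg, hi, hj] at hij
      · have : w ⟨i.val, hi⟩ = w ⟨j.val, hj⟩ := Fin.ext (by
          have := congrArg Fin.val hij; simpa using this)
        have := congrArg Fin.val (w.injective this)
        exact Fin.ext (by simpa using this)
      · have := congrArg Fin.val hij
        simp at this; omega
      · have := congrArg Fin.val hij
        simp at this
        have := (w ⟨j.val, hj⟩).isLt; omega
      · have := congrArg Fin.val hij
        simp at this
        exact Fin.ext (by omega))

lemma pad_apply_lt {m : ℕ} (w : Equiv.Perm (Fin m)) (i : Fin (m+1)) (h : i.val < m) :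
    pad w i = ⟨(w ⟨i.val, h⟩).val, by omega⟩ := by
  simp only [pad, Equiv.ofBijective_apply, dif_pos h]

lemma pad_apply_last {m : ℕ} (w : Equiv.Perm (Fin m)) (i : Fin (m+1)) (h : ¬ i.val < m) :
    pad w i = ⟨m, by omega⟩ := by
  simp only [pad, Equiv.ofBijective_apply, dif_neg h]

lemma pad_val {m : ℕ} (w : Equiv.Perm (Fin m)) (i : Fin (m+1)) :
    ((pad w) i).val = if h : i.val < m then (w ⟨i.val, h⟩).val else m := by
  by_cases h : i.val < m
  · rw [pad_apply_lt w i h, dif_pos h]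
  · rw [pad_apply_last w i h, dif_neg h]

attribute [irreducible] pad

lemma pin_pad {m : ℕ} (w : Equiv.Perm (Fin m)) : Pin (pad w) = Pin w := by
  ext v
  constructor
  · rintro ⟨i, ⟨h0, h, hl, hr⟩, rfl⟩
    -- i.val + 1 < m + 1 so i.val < m
    have him : i.val < m := by omega
    -- case i.val + 1 = m : right neighbor is the max, contradiction
    have him2 : i.val + 1 < m := by
      by_contra hc
      have : i.val + 1 = m := by omega
      rw [pad_apply_last w _ (by simp; omega), pad_apply_lt w i him] at hr
      rw [Fin.lt_def] at hr
      simp at hr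
      have := (w ⟨i.val, him⟩).isLt
      omega
    rw [pad_apply_lt w i him] at hl hr ⊢
    rw [pad_apply_lt w _ (show i.val - 1 < m by omega)] at hl
    rw [pad_apply_lt w _ (show i.val + 1 < m by omega)] at hr
    rw [Fin.lt_def] at hl hr
    simp only [Fin.val_mk] at hl hr ⊢
    refine ⟨⟨i.val, him⟩, ?_, rfl⟩
    rw [isPeak_iff]
    exact ⟨h0, him2, fun h1 => lt_of_lt_of_le hl (le_of_eq (congrArg _ (wcongr w rfl))),
      fun h2 => lt_of_lt_of_le hr (le_of_eq (congrArg _ (wcongr w rfl)))⟩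
  · rintro ⟨i, hpk, rfl⟩
    rw [isPeak_iff] at hpk
    obtain ⟨h0, hilt, hl, hr⟩ := hpk
    refine ⟨⟨i.val, by omega⟩, ?_, ?_⟩
    · rw [isPeak_iff]
      refine ⟨h0, by show i.val + 1 < m + 1; omega, fun h1 => ?_, fun h2 => ?_⟩
      · simp only [pad_val, Fin.val_mk]
        rw [dif_pos (show i.val - 1 < m by omega), dif_pos (show i.val < m by omega)]
        exact hl _
      · simp only [pad_val, Fin.val_mk]
        rw [dif_pos (show i.val + 1 < m by omega), dif_pos (show i.val < m by omega)]
        exact hr _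
    · simp only [pad_val, Fin.val_mk]
      rw [dif_pos (show i.val < m from i.isLt)]

/-- insert a new maximum at position `p` -/
noncomputable def ins {m : ℕ} (w : Equiv.Perm (Fin m)) (p : ℕ) (hp : p < m) :
    Equiv.Perm (Fin (m+1)) :=
  Equiv.ofBijective
    (fun i => if h : i.val < p then (w ⟨i.val, by omega⟩).castSucc
      else if h2 : i.val = p then Fin.last m
      else (w ⟨i.val - 1, by omega⟩).castSucc)
    (by
      apply Finite.injective_iff_bijective.mp
      intro i j hij
      have hlast : ∀ x : Fin m, x.castSucc ≠ Fin.last m := fun x => Fin.ne_of_lt (Fin.castSucc_lt_last x)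
      by_cases hi : i.val < p <;> by_cases hj : j.val < p <;>
        simp only [dif_pos, dif_neg, hi, hj] at hij
      · have := w.injective (Fin.castSucc_injective m hij)
        have := congrArg Fin.val this
        exact Fin.ext (by simpa using this)
      · by_cases hj2 : j.val = p
        · rw [dif_pos hj2] at hij; exact absurd hij (hlast _)
        · rw [dif_neg hj2] at hij
          have := congrArg Fin.val (w.injective (Fin.castSucc_injective m hij))
          simp only [Fin.val_mk] at this
          exact absurd this (by omega)
      · by_cases hi2 : i.val = p
        · rw [dif_pos hi2] at hij; exact absurd hij.symm (hlast _)
        · rw [dif_neg hi2] at hij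
          have := congrArg Fin.val (w.injective (Fin.castSucc_injective m hij))
          simp only [Fin.val_mk] at this
          exact absurd this (by omega)
      · by_cases hi2 : i.val = p <;> by_cases hj2 : j.val = p <;>
          simp only [dif_pos, dif_neg, hi2, hj2] at hij
        · exact Fin.ext (by omega)
        · exact absurd hij.symm (hlast _)
        · exact absurd hij (hlast _)
        · have := congrArg Fin.val (w.injective (Fin.castSucc_injective m hij))
          simp only [Fin.val_mk] at this
          exact Fin.ext (by omega))

lemma ins_val {m : ℕ} (w : Equiv.Perm (Fin m)) (p : ℕ) (hp : p < m) (i : Fin (m+1)) :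
    (ins w p hp i).val = if h : i.val < p then (w ⟨i.val, by omega⟩).val
      else if h2 : i.val = p then m
      else (w ⟨i.val - 1, by omega⟩).val := by
  show (if h : i.val < p then _ else if h2 : i.val = p then _ else _ : Fin (m+1)).val = _
  by_cases h : i.val < p
  · rw [dif_pos h, dif_pos h]; simp
  · rw [dif_neg h, dif_neg h]
    by_cases h2 : i.val = p
    · rw [dif_pos h2, dif_pos h2]; simp
    · rw [dif_neg h2, dif_neg h2]; simp

lemma wlt {n : ℕ} (w : Equiv.Perm (Fin n)) {a b c d : ℕ} {pa : a < n} {pb : b < n}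
    {pc : c < n} {pd : d < n} (hac : a = c) (hbd : b = d)
    (h : (w ⟨a, pa⟩).val < (w ⟨b, pb⟩).val) : (w ⟨c, pc⟩).val < (w ⟨d, pd⟩).val := by
  subst hac; subst hbd; exact h

lemma ins_val' {m : ℕ} (w : Equiv.Perm (Fin m)) (p : ℕ) (hp : p < m) (a : ℕ) (ha : a < m+1) :
    (ins w p hp ⟨a, ha⟩).val = if h : a < p then (w ⟨a, by omega⟩).val
      else if h2 : a = p then m
      else (w ⟨a - 1, by omega⟩).val := by
  have := ins_val w p hp ⟨a, ha⟩
  simpa using this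

attribute [irreducible] ins

lemma pin_ins {m : ℕ} (w : Equiv.Perm (Fin m)) (p : ℕ) (hp1 : 1 ≤ p) (hp : p < m)
    (hnp : ¬ IsPeak w ⟨p, hp⟩)
    (hnp' : ¬ IsPeak w ⟨p - 1, by omega⟩) :
    Pin (ins w p hp) = insert (m + 1) (Pin w) := by
  have hbound : ∀ j : Fin m, (w j).val < m := fun j => (w j).isLt
  have hpeak : ∀ (a : ℕ) (ha : a < m), IsPeak w ⟨a, ha⟩ ↔ (0 < a ∧ ∃ _ : a + 1 < m,
      (∀ (h1 : a - 1 < m), (w ⟨a - 1, h1⟩).val < (w ⟨a, ha⟩).val) ∧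
      (∀ (h2 : a + 1 < m), (w ⟨a + 1, h2⟩).val < (w ⟨a, ha⟩).val)) := by
    intro a ha
    rw [isPeak_iff]
  have hpeak' : ∀ (a : ℕ) (ha : a < m + 1), IsPeak (ins w p hp) ⟨a, ha⟩ ↔
      (0 < a ∧ ∃ _ : a + 1 < m + 1,
      (∀ (h1 : a - 1 < m + 1), ((ins w p hp) ⟨a - 1, h1⟩).val < ((ins w p hp) ⟨a, ha⟩).val) ∧
      (∀ (h2 : a + 1 < m + 1), ((ins w p hp) ⟨a + 1, h2⟩).val < ((ins w p hp) ⟨a, ha⟩).val)) := by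
    intro a ha
    rw [isPeak_iff]
  ext v
  simp only [Set.mem_insert_iff]
  constructor
  · rintro ⟨⟨iv, hiv⟩, hpk, rfl⟩
    rw [hpeak'] at hpk
    obtain ⟨h0, hlt, hl, hr⟩ := hpk
    have HL := hl (by omega)
    have HR := hr (by omega)
    clear hl hr
    rw [ins_val', ins_val'] at HL HR
    rcases lt_trichotomy iv p with hip | hip | hip
    · -- iv < p
      simp only [dif_pos (show iv - 1 < p by omega), dif_pos hip] at HL
      simp only [dif_pos hip] at HR
      have hi1 : iv + 1 < p := by
        rcases Nat.lt_or_ge (iv+1) p with h | h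
        · exact h
        · exfalso
          simp only [dif_neg (show ¬ iv + 1 < p by omega),
            dif_pos (show iv + 1 = p by omega)] at HR
          exact absurd HR (not_lt.2 (le_of_lt (hbound _)))
      simp only [dif_pos hi1] at HR
      right
      have him : iv < m := by omega
      have him2 : iv + 1 < m := by omega
      refine ⟨⟨iv, him⟩, ?_, ?_⟩
      · rw [hpeak]
        refine ⟨h0, him2, fun h1 => ?_, fun h2 => ?_⟩
        · exact wlt w rfl rfl HL
        · exact wlt w rfl rfl HR
      · rw [ins_val']
        simp only [dif_pos hip]
    · -- iv = p : new pinnacle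
      left
      rw [ins_val']
      simp only [dif_neg (show ¬ iv < p by omega), dif_pos hip]
    · -- iv > p
      simp only [dif_neg (show ¬ iv < p by omega), dif_neg (show ¬ iv = p by omega)] at HL HR
      simp only [dif_neg (show ¬ iv + 1 < p by omega),
        dif_neg (show ¬ iv + 1 = p by omega)] at HR
      have hi1 : p < iv - 1 := by
        rcases Nat.lt_or_ge p (iv - 1) with h | h
        · exact h
        · exfalso
          simp only [dif_neg (show ¬ iv - 1 < p by omega),
            dif_pos (show iv - 1 = p by omega)] at HL
          exact absurd HL (not_lt.2 (le_of_lt (hbound _)))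
      simp only [dif_neg (show ¬ iv - 1 < p by omega),
        dif_neg (show ¬ iv - 1 = p by omega)] at HL
      right
      have him : iv - 1 < m := by omega
      have him0 : 0 < iv - 1 := by omega
      have him2 : iv - 1 + 1 < m := by omega
      refine ⟨⟨iv - 1, him⟩, ?_, ?_⟩
      · rw [hpeak]
        refine ⟨him0, him2, fun h1 => ?_, fun h2 => ?_⟩
        · exact wlt w rfl rfl HL
        · exact wlt w (by omega) (by omega) HR
      · rw [ins_val']
        simp only [dif_neg (show ¬ iv < p by omega), dif_neg (show ¬ iv = p by omega)]
  · rintro (rfl | ⟨⟨jv, hjv⟩, hpk, rfl⟩)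
    · -- the new pinnacle m + 1
      have hpm : p < m + 1 := by omega
      have hpm2 : p + 1 < m + 1 := by omega
      refine ⟨⟨p, hpm⟩, ?_, ?_⟩
      · rw [hpeak']
        refine ⟨hp1, hpm2, fun h1 => ?_, fun h2 => ?_⟩
        · rw [ins_val', ins_val']
          simp only [dif_pos (show p - 1 < p by omega), dif_neg (show ¬ p < p by omega),
            dif_pos (show p = p from rfl), dite_true]
          exact hbound _
        · rw [ins_val', ins_val']
          simp only [dif_neg (show ¬ p + 1 < p by omega), dif_neg (show ¬ p + 1 = p by omega),
            dif_neg (show ¬ p < p by omega), dif_pos (show p = p from rfl), dite_true]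
          exact hbound _
      · rw [ins_val']
        simp only [dif_neg (show ¬ p < p by omega), dif_pos (show p = p from rfl), dite_true]
    · -- old pinnacles
      rw [hpeak] at hpk
      obtain ⟨h0, hlt, hl, hr⟩ := hpk
      have Hl := hl (by omega)
      have Hr := hr (by omega)
      have hjp : jv ≠ p := by
        rintro rfl
        exact hnp ((hpeak jv hp).2 ⟨h0, hlt, hl, hr⟩)
      have hjp' : jv ≠ p - 1 := by
        rintro rfl
        exact hnp' ((hpeak (p-1) (by omega)).2 ⟨h0, hlt, hl, hr⟩)
      clear hl hr
      rcases lt_trichotomy jv p with hjlt | h | hjgt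
      · -- jv < p, in fact jv + 1 < p
        have hj1 : jv + 1 < p := by omega
        have hjm : jv < m + 1 := by omega
        have hjm2 : jv + 1 < m + 1 := by omega
        refine ⟨⟨jv, hjm⟩, ?_, ?_⟩
        · rw [hpeak']
          refine ⟨h0, hjm2, fun h1 => ?_, fun h2 => ?_⟩
          · rw [ins_val', ins_val']
            simp only [dif_pos (show jv - 1 < p by omega), dif_pos hjlt]
            exact wlt w rfl rfl Hl
          · rw [ins_val', ins_val']
            simp only [dif_pos hj1, dif_pos hjlt]
            exact wlt w rfl rfl Hr
        · rw [ins_val']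
          simp only [dif_pos hjlt]
      · exact absurd h hjp
      · -- jv > p : shift position by one
        have hjm : jv + 1 < m + 1 := by omega
        have hjm0 : 0 < jv + 1 := by omega
        have hjm2 : jv + 1 + 1 < m + 1 := by omega
        refine ⟨⟨jv + 1, hjm⟩, ?_, ?_⟩
        · rw [hpeak']
          refine ⟨hjm0, hjm2, fun h1 => ?_, fun h2 => ?_⟩
          · rw [ins_val', ins_val']
            simp only [dif_neg (show ¬ jv + 1 - 1 < p by omega),
              dif_neg (show ¬ jv + 1 - 1 = p by omega),
              dif_neg (show ¬ jv + 1 < p by omega), dif_neg (show ¬ jv + 1 = p by omega)]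
            exact wlt w (by omega) (by omega) Hl
          · rw [ins_val', ins_val']
            simp only [dif_neg (show ¬ jv + 1 + 1 < p by omega),
              dif_neg (show ¬ jv + 1 + 1 = p by omega),
              dif_neg (show ¬ jv + 1 < p by omega), dif_neg (show ¬ jv + 1 = p by omega)]
            exact wlt w (by omega) (by omega) Hr
        · rw [ins_val']
          simp only [dif_neg (show ¬ jv + 1 < p by omega), dif_neg (show ¬ jv + 1 = p by omega)]
          have : (w ⟨jv + 1 - 1, by omega⟩).val = (w ⟨jv, hjv⟩).val :=
            congrArg Fin.val (wcongr w (by omega))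
          omega

lemma pin_one (m : ℕ) : Pin (1 : Equiv.Perm (Fin m)) = (∅ : Set ℕ) := by
  ext v
  simp only [Set.mem_empty_iff_false, iff_false]
  rintro ⟨i, ⟨h0, h, hl, hr⟩, rfl⟩
  have : ((⟨i.val + 1, h⟩ : Fin m) : Fin m) < i := hr
  rw [Fin.lt_def] at this
  simp at this

def Cond (S : Finset ℕ) : Prop := ∀ s ∈ S, 2 * (S.filter (· ≤ s)).card < s

instance : DecidablePred Cond := fun S => by unfold Cond; infer_instance

lemma pin_cond {n : ℕ} (w : Equiv.Perm (Fin n)) (S : Finset ℕ) (hP : Pin w = ↑S) :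
    Cond S := by
  intro s hs
  classical
  set Q : Finset (Fin n) := univ.filter (fun i => IsPeak w i ∧ (w i).val + 1 ≤ s) with hQ
  have memQ : ∀ i : Fin n, i ∈ Q ↔ IsPeak w i ∧ (w i).val + 1 ≤ s := by
    intro i; simp [hQ]
  -- value map
  have hval : ∀ v, v ∈ S ↔ v ∈ Pin w := by
    intro v; rw [hP]; simp
  -- image of Q under value map is filter
  have himg : Q.image (fun i => (w i).val + 1) = S.filter (· ≤ s) := by
    ext v
    simp only [mem_image, mem_filter]
    constructor
    · rintro ⟨i, hi, rfl⟩
      rw [memQ] at hi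
      exact ⟨(hval _).2 ⟨i, hi.1, rfl⟩, hi.2⟩
    · rintro ⟨hv, hvs⟩
      obtain ⟨i, hi, rfl⟩ := (hval v).1 hv
      exact ⟨i, (memQ i).2 ⟨hi, hvs⟩, rfl⟩
  have hinj : Set.InjOn (fun i => (w i).val + 1) ↑Q := by
    intro a _ b _ hab
    simp only at hab
    have : w a = w b := Fin.ext (by omega)
    exact w.injective this
  have hQcard : Q.card = (S.filter (· ≤ s)).card := by
    rw [← himg, card_image_of_injOn hinj]
  -- Q nonempty
  have hsS : s ∈ Pin w := (hval s).1 hs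
  obtain ⟨j0, hj0peak, hj0val⟩ := hsS
  have hQne : Q.Nonempty := ⟨j0, (memQ j0).2 ⟨hj0peak, le_of_eq hj0val.symm⟩⟩
  set i0 := Q.min' hQne with hi0
  have hi0Q : i0 ∈ Q := Q.min'_mem hQne
  have hi0peak : IsPeak w i0 := ((memQ i0).1 hi0Q).1
  -- neighbor value functions
  set rnbr : Fin n → ℕ := fun i => if h : i.val + 1 < n then (w ⟨i.val + 1, h⟩).val + 1 else 0
    with hrnbr
  set lval : ℕ := (w ⟨i0.val - 1, Nat.lt_of_le_of_lt (Nat.sub_le _ _) i0.isLt⟩).val + 1 with hlval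
  set A1 := Q.image (fun i => (w i).val + 1) with hA1
  set A2 := Q.image rnbr with hA2
  -- facts about peaks
  have peak_not_right : ∀ i : Fin n, IsPeak w i → ∀ (h : i.val + 1 < n),
      ¬ IsPeak w ⟨i.val + 1, h⟩ := by
    rintro i ⟨hi0, h', hl, hr⟩ h ⟨_, h2, hl2, _⟩
    rw [wcongr w (pb := i.isLt) (show (⟨i.val + 1, h⟩ : Fin n).val - 1 = i.val by simp)] at hl2
    have hr' : w ⟨i.val + 1, h⟩ < w i := hr
    exact absurd hl2 (not_lt.2 (le_of_lt hr'))
  have peak_not_left : ∀ i : Fin n, IsPeak w i →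
      ¬ IsPeak w ⟨i.val - 1, Nat.lt_of_le_of_lt (Nat.sub_le _ _) i.isLt⟩ := by
    rintro i ⟨hi0, h', hl, hr⟩ ⟨_, h2, _, hr2⟩
    rw [wcongr w (pb := i.isLt) (show (⟨i.val - 1, _⟩ : Fin n).val + 1 = i.val by simp; omega)] at hr2
    exact absurd hr2 (not_lt.2 (le_of_lt hl))
  -- A1 values are peak values, A2 /lval not
  have hA1peak : ∀ v ∈ A1, ∃ i : Fin n, IsPeak w i ∧ v = (w i).val + 1 := by
    intro v hv
    rw [hA1, mem_image] at hv
    obtain ⟨i, hi, rfl⟩ := hv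
    exact ⟨i, ((memQ i).1 hi).1, rfl⟩
  have hA2val : ∀ v ∈ A2, ∃ i : Fin n, i ∈ Q ∧ ∃ (h : i.val + 1 < n),
      v = (w ⟨i.val + 1, h⟩).val + 1 := by
    intro v hv
    rw [hA2, mem_image] at hv
    obtain ⟨i, hi, rfl⟩ := hv
    obtain ⟨_, h, _⟩ := ((memQ i).1 hi).1
    exact ⟨i, hi, h, by rw [hrnbr]; simp [h]⟩
  -- disjointness A1 A2
  have hd12 : Disjoint A1 A2 := by
    rw [disjoint_left]
    intro v h1 h2
    obtain ⟨i, hipeak, rfl⟩ := hA1peak v h1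
    obtain ⟨j, hjQ, h, heq⟩ := hA2val _ h2
    have hjpeak := ((memQ j).1 hjQ).1
    have : w i = w ⟨j.val + 1, h⟩ := Fin.ext (by omega)
    have hij : i = ⟨j.val + 1, h⟩ := w.injective this
    exact peak_not_right j hjpeak h (hij ▸ hipeak)
  have hlval_ne1 : lval ∉ A1 := by
    intro h1
    obtain ⟨i, hipeak, heq⟩ := hA1peak lval h1
    rw [hlval] at heq
    have : w i = w ⟨i0.val - 1, _⟩ := Fin.ext (by omega)
    have hij := w.injective this
    exact peak_not_left i0 hi0peak (hij ▸ hipeak)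
  have hlval_ne2 : lval ∉ A2 := by
    intro h2
    obtain ⟨j, hjQ, h, heq⟩ := hA2val _ h2
    rw [hlval] at heq
    have : w ⟨i0.val - 1, _⟩ = w ⟨j.val + 1, h⟩ := Fin.ext (by omega)
    have := w.injective this
    have hcoord : i0.val - 1 = j.val + 1 := congrArg Fin.val this
    have hji0 : i0 ≤ j := Q.min'_le j hjQ
    have : (0:ℕ) < i0.val := hi0peak.1
    have : i0.val ≤ j.val := hji0
    omega
  -- cards
  have hA1card : A1.card = (S.filter (· ≤ s)).card := by rw [himg]
  have hA2card : A2.card = (S.filter (· ≤ s)).card := by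
    rw [hA2, ← hQcard]
    apply card_image_of_injOn
    intro a ha b hb hab
    obtain ⟨_, hA, _⟩ := ((memQ a).1 ha).1
    obtain ⟨_, hB, _⟩ := ((memQ b).1 hb).1
    simp only [hrnbr, dif_pos hA, dif_pos hB] at hab
    have : w ⟨a.val+1, hA⟩ = w ⟨b.val+1, hB⟩ := Fin.ext (by omega)
    have := w.injective this
    have : a.val + 1 = b.val + 1 := congrArg Fin.val this
    exact Fin.ext (by omega)
  -- all in Icc 1 s
  have hsub : (insert lval (A1 ∪ A2)) ⊆ Finset.Icc 1 s := by
    intro v hv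
    rw [mem_insert, mem_union] at hv
    rw [mem_Icc]
    rcases hv with rfl | h1 | h2
    · obtain ⟨_, _, hl, _⟩ := hi0peak
      have hle : (w i0).val + 1 ≤ s := ((memQ i0).1 hi0Q).2
      rw [hlval]
      have : (w ⟨i0.val - 1, _⟩).val < (w i0).val := hl
      omega
    · rw [hA1, mem_image] at h1
      obtain ⟨i, hiQ, rfl⟩ := h1
      have := ((memQ i).1 hiQ).2
      omega
    · obtain ⟨i, hiQ, h, rfl⟩ := hA2val _ h2
      obtain ⟨_, h', _, hr⟩ := ((memQ i).1 hiQ).1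
      have hle : (w i).val + 1 ≤ s := ((memQ i).1 hiQ).2
      have hww : (w ⟨i.val + 1, h⟩).val < (w i).val := by
        have : (⟨i.val + 1, h⟩ : Fin n) = ⟨i.val + 1, h'⟩ := rfl
        exact hr
      omega
  -- cardinality count
  have hcard : (insert lval (A1 ∪ A2)).card = 2 * (S.filter (· ≤ s)).card + 1 := by
    rw [card_insert_of_notMem (by rw [mem_union]; tauto),
        card_union_of_disjoint hd12, hA1card, hA2card]
    ring
  have hfin : (insert lval (A1 ∪ A2)).card ≤ (Finset.Icc 1 s).card := card_le_card hsub
  rw [hcard, Nat.card_Icc] at hfin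
  omega

lemma peak_card {n : ℕ} (w : Equiv.Perm (Fin n)) (S : Finset ℕ) (hP : Pin w = ↑S) :
    letI : DecidablePred (IsPeak w) := Classical.decPred _
    (Finset.univ.filter (fun i => IsPeak w i)).card = S.card := by
  classical
  have himg : (Finset.univ.filter (fun i => IsPeak w i)).image (fun i => (w i).val + 1) = S := by
    ext v
    simp only [mem_image, mem_filter, mem_univ, true_and]
    constructor
    · rintro ⟨i, hi, rfl⟩
      have : ((w i).val + 1) ∈ Pin w := ⟨i, hi, rfl⟩
      rw [hP] at this
      exact this
    · intro hv
      have : v ∈ Pin w := by rw [hP]; exact hv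
      obtain ⟨i, hi, rfl⟩ := this
      exact ⟨i, hi, rfl⟩
  have := card_image_of_injOn (f := fun i => (w i).val + 1)
    (s := Finset.univ.filter (fun i => IsPeak w i)) (by
      intro a _ b _ hab
      simp only at hab
      exact w.injective (Fin.ext (by omega)))
  rw [himg] at this
  exact this.symm

lemma cond_erase {S : Finset ℕ} (hC : Cond S) (s : ℕ) : Cond (S.erase s) := by
  intro t ht
  have htS : t ∈ S := mem_of_mem_erase ht
  calc 2 * ((S.erase s).filter (· ≤ t)).card
      ≤ 2 * (S.filter (· ≤ t)).card := by
        have := card_le_card (filter_subset_filter (· ≤ t) (erase_subset s S))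
        omega
    _ < t := hC t htS

lemma pad_up {a : ℕ} (V : Set ℕ) (h : ∃ w : Equiv.Perm (Fin a), Pin w = V) :
    ∀ b, a ≤ b → ∃ w : Equiv.Perm (Fin b), Pin w = V := by
  intro b hb
  induction b, hb using Nat.le_induction with
  | base => exact h
  | succ b _ ih =>
    obtain ⟨w, hw⟩ := ih
    exact ⟨pad w, by rw [pin_pad, hw]⟩

lemma exists_perm : ∀ (d : ℕ) (S : Finset ℕ), S.card ≤ d → Cond S →
    ∀ m, (∀ x ∈ S, x ≤ m) → ∃ w : Equiv.Perm (Fin m), Pin w = ↑S := by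
  intro d
  induction d with
  | zero =>
    intro S hcard _ m _
    have : S = ∅ := card_eq_zero.mp (by omega)
    subst this
    exact ⟨1, by rw [pin_one]; simp⟩
  | succ d ih =>
    intro S hcard hC m hm
    classical
    rcases eq_or_ne S ∅ with rfl | hne
    · exact ⟨1, by rw [pin_one]; simp⟩
    have hSne : S.Nonempty := nonempty_iff_ne_empty.mpr hne
    set s := S.max' hSne with hs
    have hsS : s ∈ S := S.max'_mem hSne
    -- s > 2 |S|
    have hfs : S.filter (· ≤ s) = S := by
      apply filter_true_of_mem
      intro x hx
      exact S.le_max' x hx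
    have hbig : 2 * S.card < s := by
      have := hC s hsS
      rw [hfs] at this
      exact this
    have hcard1 : 1 ≤ S.card := card_pos.mpr hSne
    -- the erased set
    set S' := S.erase s with hS'
    have hC' : Cond S' := cond_erase hC s
    have hcard' : S'.card = S.card - 1 := card_erase_of_mem hsS
    obtain ⟨w', hw'⟩ := ih S' (by omega) hC' (s - 1) (by
      intro x hx
      have hxs : x ≤ s := S.le_max' x (mem_of_mem_erase hx)
      have hxne : x ≠ s := ne_of_mem_erase hx
      omega)
    -- peak positions
    set P : Finset ℕ := (Finset.univ.filter (fun i => IsPeak w' i)).image Fin.val with hPdef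
    have hPcard : P.card = S.card - 1 := by
      rw [hPdef, card_image_of_injective _ Fin.val_injective]
      rw [peak_card w' S' hw', hcard']
    set bad : Finset ℕ := P ∪ P.image (· + 1) with hbad
    have hbadcard : bad.card ≤ 2 * (S.card - 1) := by
      calc bad.card ≤ P.card + (P.image (· + 1)).card := card_union_le _ _
        _ ≤ P.card + P.card := by have := card_image_le (f := (· + 1)) (s := P); omega
        _ = 2 * (S.card - 1) := by omega
    set cand : Finset ℕ := Finset.Icc 1 (s - 2) with hcand
    have hcandcard : cand.card = s - 2 := by rw [hcand, Nat.card_Icc]; omega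
    have hnotsub : ¬ cand ⊆ bad := by
      intro hsub
      have := card_le_card hsub
      omega
    obtain ⟨p, hpc, hpb⟩ := not_subset.mp hnotsub
    rw [hcand, mem_Icc] at hpc
    have hp1 : 1 ≤ p := hpc.1
    have hps : p < s - 1 := by omega
    have hnp : ¬ IsPeak w' ⟨p, hps⟩ := by
      intro hpk
      exact hpb (mem_union_left _ (mem_image_of_mem Fin.val (mem_filter.mpr ⟨mem_univ _, hpk⟩)))
    have hnp' : ¬ IsPeak w' ⟨p - 1, by omega⟩ := by
      intro hpk
      apply hpb
      apply mem_union_right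
      rw [mem_image]
      refine ⟨p - 1, ?_, by omega⟩
      exact mem_image_of_mem Fin.val (mem_filter.mpr ⟨mem_univ _, hpk⟩)
    -- insert
    have hkey : ∃ w : Equiv.Perm (Fin (s - 1 + 1)), Pin w = ↑S := by
      refine ⟨ins w' p hps, ?_⟩
      rw [pin_ins w' p hp1 hps hnp hnp', hw']
      have h1 : s - 1 + 1 = s := by omega
      rw [h1]
      rw [← coe_insert, insert_erase hsS]
    have hsm : s ≤ m := hm s hsS
    exact pad_up (↑S) hkey m (by omega)

def VS (n k : ℕ) : Finset (Finset ℕ) :=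
  (Finset.Icc 1 n).powerset.filter (fun S => Cond S ∧ S.card = k)

lemma vs_zero (n : ℕ) : VS n 0 = {∅} := by
  ext S
  simp only [VS, mem_filter, mem_powerset, mem_singleton, card_eq_zero]
  constructor
  · rintro ⟨_, _, h⟩; exact h
  · rintro rfl
    exact ⟨empty_subset _, fun s hs => absurd hs (notMem_empty s), rfl⟩

lemma vs_succ (n k : ℕ) : (VS (n+1) (k+1)).card =
    (VS n (k+1)).card + if 2*(k+1) ≤ n then (VS n k).card else 0 := by
  classical
  have hsplit := card_filter_add_card_filter_not
    (s := VS (n+1) (k+1)) (p := fun S => (n+1) ∈ S)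
  have hA : (VS (n+1) (k+1)).filter (fun S => (n+1) ∉ S) = VS n (k+1) := by
    ext S
    simp only [VS, mem_filter, mem_powerset]
    constructor
    · rintro ⟨⟨hsub, hc, hk⟩, hnot⟩
      refine ⟨?_, hc, hk⟩
      intro x hx
      have := hsub hx
      rw [mem_Icc] at this ⊢
      have : x ≠ n + 1 := fun h => hnot (h ▸ hx)
      omega
    · rintro ⟨hsub, hc, hk⟩
      have hn1 : (n+1) ∉ S := by
        intro h
        have := hsub h
        rw [mem_Icc] at this
        omega
      exact ⟨⟨hsub.trans (Icc_subset_Icc_right (by omega)), hc, hk⟩, hn1⟩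
  have hB : (VS (n+1) (k+1)).filter (fun S => (n+1) ∈ S) =
      if 2*(k+1) ≤ n then (VS n k).image (insert (n+1)) else ∅ := by
    split_ifs with hcond
    · ext S
      simp only [VS, mem_filter, mem_powerset, mem_image]
      constructor
      · rintro ⟨⟨hsub, hc, hk⟩, hmem⟩
        refine ⟨S.erase (n+1), ⟨?_, ?_, ?_⟩, insert_erase hmem⟩
        · intro x hx
          have hxS := hsub (mem_of_mem_erase hx)
          have hxne := ne_of_mem_erase hx
          rw [mem_Icc] at hxS ⊢
          omega
        · exact cond_erase hc (n+1)
        · rw [card_erase_of_mem hmem, hk]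
          omega
      · rintro ⟨T, ⟨hsub, hc, hk⟩, rfl⟩
        have hnT : (n+1) ∉ T := by
          intro h
          have := hsub h
          rw [mem_Icc] at this
          omega
        refine ⟨⟨?_, ?_, ?_⟩, mem_insert_self _ _⟩
        · intro x hx
          rw [mem_insert] at hx
          rcases hx with rfl | hx
          · rw [mem_Icc]; omega
          · have := hsub hx
            rw [mem_Icc] at this ⊢
            omega
        · -- Cond (insert (n+1) T)
          intro t ht
          rw [mem_insert] at ht
          rcases ht with rfl | ht
          · have hfil : (insert (n+1) T).filter (· ≤ n+1) = insert (n+1) T := by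
              apply filter_true_of_mem
              intro x hx
              rw [mem_insert] at hx
              rcases hx with rfl | hx
              · exact le_refl _
              · have := hsub hx
                rw [mem_Icc] at this
                omega
            rw [hfil, card_insert_of_notMem hnT, hk]
            omega
          · have hfil : (insert (n+1) T).filter (· ≤ t) = T.filter (· ≤ t) := by
              rw [filter_insert]
              rw [if_neg]
              have := hsub ht
              rw [mem_Icc] at this
              omega
            rw [hfil]
            exact hc t ht
        · rw [card_insert_of_notMem hnT, hk]
    · rw [eq_empty_iff_forall_notMem]
      intro S hS
      simp only [VS, mem_filter, mem_powerset] at hS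
      obtain ⟨⟨hsub, hc, hk⟩, hmem⟩ := hS
      have hfil : S.filter (· ≤ n+1) = S := by
        apply filter_true_of_mem
        intro x hx
        have := hsub hx
        rw [mem_Icc] at this
        omega
      have := hc (n+1) hmem
      rw [hfil, hk] at this
      omega
  have hBcard : ((VS (n+1) (k+1)).filter (fun S => (n+1) ∈ S)).card =
      if 2*(k+1) ≤ n then (VS n k).card else 0 := by
    rw [hB]
    split_ifs with hcond
    · apply card_image_of_injOn
      intro A hA' B hB' hAB
      simp only [VS, coe_filter, mem_powerset, Set.mem_setOf_eq] at hA' hB'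
      have hnA : (n+1) ∉ A := fun h => by
        have := hA'.1 h; rw [mem_Icc] at this; omega
      have hnB : (n+1) ∉ B := fun h => by
        have := hB'.1 h; rw [mem_Icc] at this; omega
      have : (insert (n+1) A).erase (n+1) = (insert (n+1) B).erase (n+1) := by rw [hAB]
      rwa [erase_insert hnA, erase_insert hnB] at this
    · exact card_empty
  rw [hBcard, hA] at hsplit
  omega

lemma g_lt {n k : ℕ} (hk : 1 ≤ k) (hne : (VS n k).Nonempty) : 2 * k < n := by
  obtain ⟨S, hS⟩ := hne
  simp only [VS, mem_filter, mem_powerset] at hS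
  obtain ⟨hsub, hc, hkcard⟩ := hS
  have hSne : S.Nonempty := card_pos.mp (by omega)
  have hmax := S.max'_mem hSne
  have hfil : S.filter (· ≤ S.max' hSne) = S :=
    filter_true_of_mem (fun x hx => S.le_max' x hx)
  have h1 := hc _ hmax
  rw [hfil, hkcard] at h1
  have h2 := hsub hmax
  rw [mem_Icc] at h2
  omega

lemma g_big {n k : ℕ} (hk : 1 ≤ k) (hbig : n ≤ 2 * k) : (VS n k).card = 0 := by
  rw [card_eq_zero, eq_empty_iff_forall_notMem]
  intro S hS
  have := g_lt hk ⟨S, hS⟩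
  omega

lemma g_formula : ∀ n' k : ℕ, 2 * (k + 1) ≤ n' →
    (VS (n'+1) (k+1)).card + n'.choose k = n'.choose (k+1) := by
  intro n'
  induction n' with
  | zero => intro k hk; omega
  | succ n' ihn =>
    intro k hk
    have hrec := vs_succ (n'+1) k
    rw [if_pos (by omega : 2*(k+1) ≤ n'+1)] at hrec
    have hpas : (n'+1).choose (k+1) = n'.choose k + n'.choose (k+1) :=
      Nat.choose_succ_succ n' k
    rcases Nat.lt_or_ge (2*(k+1)) (n'+1) with hlt | hge
    · -- 2(k+1) ≤ n'
      have ih1 := ihn k (by omega)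
      rcases Nat.eq_zero_or_pos k with rfl | hkpos
      · -- k = 0
        have h0 : (VS (n'+1) 0).card = 1 := by rw [vs_zero]; simp
        have hc0 : (n'+1).choose 0 = 1 := Nat.choose_zero_right _
        have hc0' : n'.choose 0 = 1 := Nat.choose_zero_right _
        omega
      · obtain ⟨j, rfl⟩ : ∃ j, k = j + 1 := ⟨k - 1, by omega⟩
        have ih2 := ihn j (by omega)
        have hpas' : (n'+1).choose (j+1) = n'.choose j + n'.choose (j+1) :=
          Nat.choose_succ_succ n' j
        omega
    · -- 2(k+1) = n'+1
      have heq : 2 * (k + 1) = n' + 1 := by omega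
      have hzero : (VS (n'+1) (k+1)).card = 0 := g_big (by omega) (by omega)
      have hsymm : n'.choose k = n'.choose (k+1) := by
        have h1 : k ≤ n' := by omega
        have := Nat.choose_symm h1
        have h2 : n' - k = k + 1 := by omega
        rw [h2] at this
        exact this.symm
      rcases Nat.eq_zero_or_pos k with rfl | hkpos
      · -- k = 0, n' = 1
        have hn1 : n' = 1 := by omega
        subst hn1
        have h0 : (VS (1+1) 0).card = 1 := by rw [vs_zero]; simp
        have hc1 : (1+1).choose 0 = 1 := rfl
        have hc2 : (1+1).choose (0+1) = 2 := rfl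
        omega
      · obtain ⟨j, rfl⟩ : ∃ j, k = j + 1 := ⟨k - 1, by omega⟩
        have ih2 := ihn j (by omega)
        have hpas' : (n'+1).choose (j+1) = n'.choose j + n'.choose (j+1) :=
          Nat.choose_succ_succ n' j
        omega

lemma count_cond (n0 : ℕ) :
    ((Finset.Icc 1 (n0+1)).powerset.filter (fun S => Cond S)).card = n0.choose (n0 / 2) := by
  classical
  set A := (Finset.Icc 1 (n0+1)).powerset.filter (fun S => Cond S) with hA
  have hfib : A.card = ∑ k ∈ Finset.range (n0+2), (VS (n0+1) k).card := by
    rw [card_eq_sum_card_fiberwise (f := fun S => S.card) (t := Finset.range (n0+2)) (by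
      intro S hS
      rw [Finset.mem_coe, mem_range]
      show S.card < n0 + 2
      rw [Finset.mem_coe, hA, mem_filter, mem_powerset] at hS
      have h1 := card_le_card hS.1
      rw [Nat.card_Icc] at h1
      omega)]
    apply Finset.sum_congr rfl
    intro k _
    congr 1
    ext S
    simp only [VS, hA, mem_filter, mem_powerset, and_assoc]
  have hpartial : ∀ j, 2*j ≤ n0 → ∑ k ∈ Finset.range (j+1), (VS (n0+1) k).card = n0.choose j := by
    intro j
    induction j with
    | zero =>
      intro _
      rw [Finset.sum_range_one, vs_zero]
      simp
    | succ j ihj =>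
      intro hj
      rw [Finset.sum_range_succ, ihj (by omega)]
      have := g_formula n0 j (by omega)
      omega
  set K := n0 / 2 with hK
  have hzero : ∀ k ∈ Finset.range (n0+2), k ∉ Finset.range (K+1) → (VS (n0+1) k).card = 0 := by
    intro k _ hk2
    rw [mem_range] at hk2
    exact g_big (by omega) (by omega)
  have hsub : Finset.range (K+1) ⊆ Finset.range (n0+2) := by
    apply Finset.range_subset_range.mpr
    omega
  rw [hfib, ← Finset.sum_subset hsub hzero, hpartial K (by omega)]

lemma admissible_iff (S : Finset ℕ) : Admissible S ↔ Cond S := by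
  constructor
  · rintro ⟨n, w, h⟩
    exact pin_cond w S h
  · intro hC
    obtain ⟨w, hw⟩ := exists_perm S.card S le_rfl hC (S.sup id)
      (fun x hx => Finset.le_sup (f := id) hx)
    exact ⟨S.sup id, w, hw⟩

theorem count_admissible_subsets (n : ℕ) (hn : 1 ≤ n) :
    Nat.card {S : Finset ℕ // ↑S ⊆ Set.Icc 1 n ∧ Admissible S} =
      Nat.choose (n - 1) ((n - 1) / 2) := by
  classical
  obtain ⟨n0, rfl⟩ : ∃ n0, n = n0 + 1 := ⟨n - 1, by omega⟩
  have e : {S : Finset ℕ // ↑S ⊆ Set.Icc 1 (n0+1) ∧ Admissible S} ≃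
      {S : Finset ℕ // S ∈ (Finset.Icc 1 (n0+1)).powerset.filter (fun S => Cond S)} := by
    apply Equiv.subtypeEquivRight
    intro S
    rw [mem_filter, mem_powerset]
    constructor
    · rintro ⟨h1, h2⟩
      refine ⟨?_, (admissible_iff S).mp h2⟩
      rw [← Finset.coe_subset, Finset.coe_Icc]
      exact h1
    · rintro ⟨h1, h2⟩
      refine ⟨?_, (admissible_iff S).mpr h2⟩
      rw [← Finset.coe_Icc]
      exact Finset.coe_subset.mpr h1
  have hfc := Nat.card_eq_finsetCard ((Finset.Icc 1 (n0+1)).powerset.filter (fun S => Cond S))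
  rw [Nat.card_congr e, hfc, count_cond]
  simp
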